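/- arXiv:1106.2302 — 8 statements merged into one kernel-verified Lean document; each statement's English description precedes it below -/
import Mathlib

section
/- For all real numbers x and α with 0 ≤ x ≤ 1 and 0 ≤ α ≤ 1, one has (2 - 2^α) * x^α * (1-x)^α ≤ (1-x)^α - (1 - x^α). -/
open Real

/-- The key estimate for `x ≤ 1/2`. -/
lemma key_half (x α : ℝ) (hx0 : 0 ≤ x) (hx2 : x ≤ 1/2) (hα0 : 0 ≤ α) (hα1 : α ≤ 1) :
    (2 - (2:ℝ) ^ α) * x ^ α * (1 - x) ^ α ≤ (1 - x) ^ α - (1 - x ^ α) := by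
  have h2 : (2:ℝ) ^ α ≤ 2 := by
    calc (2:ℝ) ^ α ≤ (2:ℝ) ^ (1:ℝ) :=
      Real.rpow_le_rpow_of_exponent_le one_le_two hα1
    _ = 2 := Real.rpow_one 2
  have hc0 : 0 ≤ 2 - (2:ℝ) ^ α := by linarith
  have hx1 : (0:ℝ) ≤ 1 - x := by linarith
  -- product of powers is power of product
  have hmul : x ^ α * (1 - x) ^ α = (x * (1 - x)) ^ α :=
    (Real.mul_rpow hx0 hx1).symm
  have hxx : x * (1 - x) ≤ x := by nlinarith
  have hprod : (x * (1 - x)) ^ α ≤ x ^ α :=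
    Real.rpow_le_rpow (by positivity) hxx hα0
  -- reduce to `(2^α - 1) * x^α + (1-x)^α ≥ 1`
  have main : 1 ≤ ((2:ℝ) ^ α - 1) * x ^ α + (1 - x) ^ α := by
    set u : ℝ := 2 * x with hu
    have hu0 : 0 ≤ u := by positivity
    have hu1 : u ≤ 1 := by simp only [hu]; linarith
    -- x = u * (1/2)
    have hxu : x = u * (1/2) := by simp [hu]; ring
    have hhalf : (0:ℝ) ≤ (1:ℝ)/2 := by norm_num
    have hxα : x ^ α = u ^ α * ((1:ℝ)/2) ^ α := by
      rw [hxu, Real.mul_rpow hu0 hhalf]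
    -- (2^α - 1) * (1/2)^α = 1 - (1/2)^α
    have hinv : (2:ℝ) ^ α * ((1:ℝ)/2) ^ α = 1 := by
      rw [← Real.mul_rpow (by norm_num) hhalf]
      norm_num
    -- u^α ≥ u
    have huα : u ≤ u ^ α := by
      rcases eq_or_lt_of_le hu0 with h0 | h0
      · rcases eq_or_lt_of_le hα0 with hA | hA
        · simp [← h0, ← hA]
        · simp [← h0, Real.zero_rpow (ne_of_gt hA)]
      · calc u = u ^ (1:ℝ) := (Real.rpow_one u).symm
        _ ≤ u ^ α := Real.rpow_le_rpow_of_exponent_ge h0 hu1 hα1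
    -- concavity: (1 - u/2)^α ≥ (1-u) * 1 + u * (1/2)^α
    have hconc : (1 - u) * 1 + u * ((1:ℝ)/2) ^ α ≤ (1 - x) ^ α := by
      have h := (Real.concaveOn_rpow hα0 hα1).2 (x := (1:ℝ)) (y := (1:ℝ)/2)
        (by simp) (by norm_num : ((1:ℝ)/2) ∈ Set.Ici (0:ℝ))
        (by linarith : 0 ≤ 1 - u) hu0 (by ring)
      have harg : (1 - u) • (1:ℝ) + u • ((1:ℝ)/2) = 1 - x := by
        simp [smul_eq_mul, hxu]; ring
      rw [harg] at h
      simpa [smul_eq_mul, Real.one_rpow] using h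
    -- (1/2)^α ≤ 1
    have hhalf1 : ((1:ℝ)/2) ^ α ≤ 1 := by
      calc ((1:ℝ)/2) ^ α ≤ (1:ℝ) ^ α :=
        Real.rpow_le_rpow (by norm_num) (by norm_num) hα0
      _ = 1 := Real.one_rpow α
    have huαn : 0 ≤ u ^ α := Real.rpow_nonneg hu0 α
    nlinarith [mul_le_mul_of_nonneg_left huα (by linarith : 0 ≤ 1 - ((1:ℝ)/2) ^ α)]
  have hx0α : 0 ≤ x ^ α := Real.rpow_nonneg hx0 α
  calc (2 - (2:ℝ) ^ α) * x ^ α * (1 - x) ^ α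
      = (2 - (2:ℝ) ^ α) * ((x * (1 - x)) ^ α) := by rw [mul_assoc, hmul]
    _ ≤ (2 - (2:ℝ) ^ α) * x ^ α := by
        exact mul_le_mul_of_nonneg_left hprod hc0
    _ ≤ (1 - x) ^ α - (1 - x ^ α) := by nlinarith

theorem stmt1 (x α : ℝ) (hx0 : 0 ≤ x) (hx1 : x ≤ 1) (hα0 : 0 ≤ α) (hα1 : α ≤ 1) :
    (2 - (2:ℝ) ^ α) * x ^ α * (1 - x) ^ α ≤ (1 - x) ^ α - (1 - x ^ α) := by
  rcases le_or_gt x (1/2) with h | h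
  · exact key_half x α hx0 h hα0 hα1
  · have := key_half (1 - x) α (by linarith) (by linarith) hα0 hα1
    rw [show (1 : ℝ) - (1 - x) = x by ring] at this
    linarith
end

section
/- For all real numbers x and α with 0 ≤ x ≤ 1 and 0 ≤ α ≤ 1, one has (1-x)^α - (1 - x^α) ≤ x^α * (1-x)^α. -/
theorem stmt2 (x α : ℝ) (hx0 : 0 ≤ x) (hx1 : x ≤ 1) (hα0 : 0 ≤ α) (hα1 : α ≤ 1) :
    (1 - x) ^ α - (1 - x ^ α) ≤ x ^ α * (1 - x) ^ α := by
  have h1 : x ^ α ≤ 1 := Real.rpow_le_one hx0 hx1 hα0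
  have h2 : (1 - x) ^ α ≤ 1 := Real.rpow_le_one (by linarith) (by linarith) hα0
  have h3 : 0 ≤ (1 - x) ^ α := Real.rpow_nonneg (by linarith) α
  nlinarith
end

section
/- Let 0 < H < 1 and define G(x) = x^(2H) - (1/4) * (1 + x^(2H) - (1-x)^(2H))^2 for x in [0,1]. Then for all x in [0,1], (1/2)*(2 - 2^H) * x^(2H) * (1-x)^(2H) ≤ G(x) ≤ 2 * x^(2H) * (1-x)^(2H). -/
-- monotonicity in exponent for x in [0,1], allowing x = 0
lemma rp_mono {x : ℝ} (hx0 : 0 ≤ x) (hx1 : x ≤ 1) {r s : ℝ} (hr : 0 < r) (hrs : r ≤ s) :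
    x ^ s ≤ x ^ r := by
  rcases eq_or_lt_of_le hx0 with h | h
  · rw [← h, Real.zero_rpow (hr.trans_le hrs).ne', Real.zero_rpow hr.ne']
  · exact Real.rpow_le_rpow_of_exponent_ge h hx1 hrs

lemma key (H : ℝ) (hH0 : 0 < H) (hH1 : H < 1) (x : ℝ) (hx0 : 0 ≤ x) (hx1 : x ≤ 1) :
    (x ^ (2*H) + (1-x) ^ (2*H) - 1)^2 ≤ 2 * 2 ^ H * (x ^ (2*H) * (1-x) ^ (2*H)) := by
  have hq0 : (0:ℝ) ≤ 1 - x := by linarith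
  have hq1 : 1 - x ≤ 1 := by linarith
  have hβ : 0 < 2*H := by linarith
  have hA0 : 0 ≤ x ^ (2*H) := Real.rpow_nonneg hx0 _
  have hB0 : 0 ≤ (1-x) ^ (2*H) := Real.rpow_nonneg hq0 _
  have hA1 : x ^ (2*H) ≤ 1 := Real.rpow_le_one hx0 hx1 hβ.le
  have hB1 : (1-x) ^ (2*H) ≤ 1 := Real.rpow_le_one hq0 hq1 hβ.le
  have h2H : (1:ℝ) ≤ 2 ^ H := Real.one_le_rpow (by norm_num) hH0.le
  rcases le_total H (1/2) with hH | hH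
  · -- β = 2H ≤ 1 : A ≥ x, B ≥ 1-x so A+B ≥ 1; and A+B-1 ≤ min A B
    have hAx : x ^ (1:ℝ) ≤ x ^ (2*H) := rp_mono hx0 hx1 hβ (by linarith)
    have hBx : (1-x) ^ (1:ℝ) ≤ (1-x) ^ (2*H) := rp_mono hq0 hq1 hβ (by linarith)
    rw [Real.rpow_one] at hAx hBx
    nlinarith [mul_nonneg hA0 hB0, mul_le_mul hA1 hB1 hB0 zero_le_one]
  · -- β = 2H ≥ 1
    have hAx : x ^ (2*H) ≤ x ^ (1:ℝ) := rp_mono hx0 hx1 one_pos (by linarith)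
    have hBx : (1-x) ^ (2*H) ≤ (1-x) ^ (1:ℝ) := rp_mono hq0 hq1 one_pos (by linarith)
    rw [Real.rpow_one] at hAx hBx
    have hA2 : x ^ (2:ℝ) ≤ x ^ (2*H) := rp_mono hx0 hx1 hβ (by linarith)
    have hB2 : (1-x) ^ (2:ℝ) ≤ (1-x) ^ (2*H) := rp_mono hq0 hq1 hβ (by linarith)
    rw [Real.rpow_two] at hA2 hB2
    -- 0 ≤ 1 - A - B ≤ 2x(1-x), so S^2 ≤ 4 x^2 (1-x)^2
    set A := x ^ (2*H); set B := (1-x) ^ (2*H)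
    have hS1 : A + B ≤ 1 := by linarith
    have hS2 : 1 - A - B ≤ 2 * (x*(1-x)) := by nlinarith
    have hSq : (A + B - 1)^2 ≤ 4 * (x*(1-x))^2 := by nlinarith
    -- now 4 (pq)^2 ≤ 2 * 2^H * (pq)^{2H}
    have hpq0 : 0 ≤ x*(1-x) := mul_nonneg hx0 hq0
    have hpq4 : x*(1-x) ≤ 1/4 := by nlinarith [sq_nonneg (x - 1/2)]
    have hAB : A * B = (x*(1-x)) ^ (2*H) := (Real.mul_rpow hx0 hq0).symm
    have h1 : (x*(1-x))^2 = (x*(1-x)) ^ (2-2*H) * (x*(1-x)) ^ (2*H) := by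
      rw [← Real.rpow_natCast (x*(1-x)) 2, ← Real.rpow_add_of_nonneg hpq0 (by linarith) hβ.le]
      norm_num
    have h2 : (x*(1-x)) ^ (2-2*H) ≤ (1/4 : ℝ) ^ (2-2*H) :=
      Real.rpow_le_rpow hpq0 hpq4 (by linarith)
    have h3 : (1/4 : ℝ) ^ (2-2*H) = 2 ^ (4*H - 4) := by
      have : (1/4 : ℝ) = 2 ^ (-2 : ℝ) := by
        rw [Real.rpow_neg (by norm_num)]; norm_num
      rw [this, ← Real.rpow_mul (by norm_num)]; ring_nf
    have h4 : (4:ℝ) * 2 ^ (4*H-4) = 2 ^ (4*H - 2) := by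
      have : (4:ℝ) = 2 ^ (2:ℝ) := by
        rw [show (2:ℝ) ^ (2:ℝ) = 2^(2:ℕ) by rw [← Real.rpow_natCast]; norm_num]; norm_num
      rw [this, ← Real.rpow_add (by norm_num)]; ring_nf
    have h5 : (2:ℝ) ^ (4*H - 2) ≤ 2 ^ (H + 1) :=
      Real.rpow_le_rpow_of_exponent_le (by norm_num) (by linarith)
    have h6 : (2:ℝ) ^ (H + 1) = 2 * 2 ^ H := by
      rw [Real.rpow_add (by norm_num), Real.rpow_one]; ring
    have hpqH : 0 ≤ (x*(1-x)) ^ (2*H) := Real.rpow_nonneg hpq0 _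
    calc (A + B - 1)^2 ≤ 4 * (x*(1-x))^2 := hSq
      _ = 4 * ((x*(1-x)) ^ (2-2*H) * (x*(1-x)) ^ (2*H)) := by rw [h1]
      _ ≤ 4 * (2 ^ (4*H-4) * (x*(1-x)) ^ (2*H)) := by
          apply mul_le_mul_of_nonneg_left (mul_le_mul_of_nonneg_right (h2.trans_eq h3) hpqH) (by norm_num)
      _ = 2 ^ (4*H-2) * (x*(1-x)) ^ (2*H) := by rw [← h4]; ring
      _ ≤ 2 ^ (H+1) * (x*(1-x)) ^ (2*H) := mul_le_mul_of_nonneg_right h5 hpqH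
      _ = 2 * 2 ^ H * (A * B) := by rw [h6, hAB]

theorem stmt3 (H : ℝ) (hH0 : 0 < H) (hH1 : H < 1)
    (G : ℝ → ℝ)
    (hG : ∀ x, G x = x ^ (2*H) - (1/4) * (1 + x ^ (2*H) - (1 - x) ^ (2*H))^2) :
    ∀ x : ℝ, 0 ≤ x → x ≤ 1 →
      (1/2) * (2 - (2:ℝ) ^ H) * x ^ (2*H) * (1 - x) ^ (2*H) ≤ G x ∧
      G x ≤ 2 * x ^ (2*H) * (1 - x) ^ (2*H) := by
  intro x hx0 hx1
  have hq0 : (0:ℝ) ≤ 1 - x := by linarith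
  have hA0 : 0 ≤ x ^ (2*H) := Real.rpow_nonneg hx0 _
  have hB0 : 0 ≤ (1-x) ^ (2*H) := Real.rpow_nonneg hq0 _
  have hk := key H hH0 hH1 x hx0 hx1
  rw [hG x]
  constructor
  · nlinarith [mul_nonneg hA0 hB0]
  · nlinarith [mul_nonneg hA0 hB0, sq_nonneg (x ^ (2*H) + (1-x) ^ (2*H) - 1)]
end

section
/- Let 0 < H < 1 and 0 < s ≤ t. Set μ = (1/2)*(t^(2H) + s^(2H) - (t-s)^(2H)). Then (1/2)*(2 - 2^H) * s^(2H) * (t-s)^(2H) ≤ t^(2H) * s^(2H) - μ^2 ≤ 2 * s^(2H) * (t-s)^(2H). -/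
open Real

lemma aux4 (H : ℝ) (hH0 : 0 < H) (hH1 : H < 1) {v w : ℝ} (hv : 0 ≤ v) (hvw : v ≤ w) :
    (v + w) ^ H + v ^ H ≤ (2 * v) ^ H + w ^ H := by
  rcases eq_or_lt_of_le hv with rfl | hv'
  · simp [Real.zero_rpow hH0.ne']
  have hw : 0 < w := lt_of_lt_of_le hv' hvw
  have hc : ConcaveOn ℝ (Set.Ici 0) (fun x : ℝ => x ^ H) :=
    Real.concaveOn_rpow hH0.le hH1.le
  have ha : (0:ℝ) ≤ 1 - v / w := by
    have : v / w ≤ 1 := (div_le_one hw).2 hvw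
    linarith
  have hb : (0:ℝ) ≤ v / w := by positivity
  have hab : (1 - v / w) + v / w = 1 := by ring
  have hab2 : v / w + (1 - v / w) = 1 := by ring
  have hmemv : v ∈ Set.Ici (0:ℝ) := hv
  have hmemvw : v + w ∈ Set.Ici (0:ℝ) := by simp; linarith
  have h1 := hc.2 hmemv hmemvw ha hb hab
  have h2 := hc.2 hmemv hmemvw hb ha hab2
  simp only [smul_eq_mul] at h1 h2
  have e1 : (1 - v / w) * v + v / w * (v + w) = 2 * v := by field_simp; ring
  have e2 : v / w * v + (1 - v / w) * (v + w) = w := by field_simp; ring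
  rw [e1] at h1
  rw [e2] at h2
  nlinarith [h1, h2]

theorem stmt4 (H s t : ℝ) (hH0 : 0 < H) (hH1 : H < 1) (hs : 0 < s) (hst : s ≤ t)
    (μ : ℝ) (hμ : μ = (1/2) * (t ^ (2*H) + s ^ (2*H) - (t - s) ^ (2*H))) :
    (1/2) * (2 - (2:ℝ) ^ H) * s ^ (2*H) * (t - s) ^ (2*H)
      ≤ t ^ (2*H) * s ^ (2*H) - μ^2 ∧
    t ^ (2*H) * s ^ (2*H) - μ^2 ≤ 2 * s ^ (2*H) * (t - s) ^ (2*H) := by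
  have ht : 0 < t := lt_of_lt_of_le hs hst
  have hts : 0 ≤ t - s := by linarith
  have hsq : ∀ x : ℝ, 0 ≤ x → x ^ (2*H) = (x ^ H)^2 := by
    intro x hx
    rw [mul_comm, Real.rpow_mul hx]
    norm_num
  rw [hsq s hs.le, hsq t ht.le, hsq (t-s) hts] at hμ ⊢
  set S := s ^ H with hSdef
  set T := t ^ H with hTdef
  set D := (t - s) ^ H with hDdef
  set K := (2:ℝ) ^ H with hKdef
  have hS : 0 < S := Real.rpow_pos_of_pos hs H
  have hT : 0 < T := Real.rpow_pos_of_pos ht H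
  have hD : 0 ≤ D := Real.rpow_nonneg hts H
  have hST : S ≤ T := Real.rpow_le_rpow hs.le hst hH0.le
  have hDT : D ≤ T := Real.rpow_le_rpow hts (by linarith) hH0.le
  have hK0 : 0 < K := Real.rpow_pos_of_pos (by norm_num) H
  have hK2 : K ≤ 2 := by
    calc K ≤ (2:ℝ) ^ (1:ℝ) := Real.rpow_le_rpow_of_exponent_le (by norm_num) hH1.le
    _ = 2 := Real.rpow_one 2
  subst hμ
  have hmul : ∀ x : ℝ, 0 ≤ x → (2 * x) ^ H = K * x ^ H := by
    intro x hx
    rw [hKdef, Real.mul_rpow (by norm_num) hx]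
  -- key inequality: S + D - T ≥ (2-K) * max-ish
  have key : T + S ≤ K * S + D ∨ T + D ≤ K * D + S := by
    rcases le_total s (t - s) with h | h
    · left
      have := aux4 H hH0 hH1 hs.le h
      rw [hmul s hs.le] at this
      have e : s + (t - s) = t := by ring
      rw [e] at this
      linarith
    · right
      have := aux4 H hH0 hH1 hts h
      rw [hmul (t - s) hts] at this
      have e : (t - s) + s = t := by ring
      rw [e] at this
      linarith
  constructor
  · -- lower bound
    have hprod : 2 * (2 - K) * S^2 * D^2
        ≤ (T + S - D) * (T + S + D) * ((S + D - T) * (T + D - S)) := by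
      rcases key with k | k
      · have hF3 : (2 - K) * S ≤ S + D - T := by nlinarith
        have hF3' : (0:ℝ) ≤ S + D - T := by nlinarith [mul_nonneg (by linarith : (0:ℝ) ≤ 2 - K) hS.le]
        have h34 : (2 - K) * S * D ≤ (S + D - T) * (T + D - S) :=
          mul_le_mul hF3 (by linarith) hD hF3'
        have h12 : S * (2 * D) ≤ (T + S - D) * (T + S + D) :=
          mul_le_mul (by linarith) (by linarith) (by linarith) (by linarith)
        have := mul_le_mul h12 h34
          (mul_nonneg (mul_nonneg (by linarith) hS.le) hD)
          (mul_nonneg (by linarith) (by linarith))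
        nlinarith [this]
      · have hF3 : (2 - K) * D ≤ S + D - T := by nlinarith
        have hF3' : (0:ℝ) ≤ S + D - T := by nlinarith [mul_nonneg (by linarith : (0:ℝ) ≤ 2 - K) hD]
        have h34 : (2 - K) * D * D ≤ (S + D - T) * (T + D - S) :=
          mul_le_mul hF3 (by linarith) hD hF3'
        have h12 : S * (2 * S) ≤ (T + S - D) * (T + S + D) :=
          mul_le_mul (by linarith) (by linarith) (by linarith) (by linarith)
        have := mul_le_mul h12 h34
          (mul_nonneg (mul_nonneg (by linarith) hD) hD)
          (mul_nonneg (by linarith) (by linarith))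
        nlinarith [this]
    nlinarith [hprod]
  · nlinarith [sq_nonneg (T^2 - S^2 - D^2), mul_nonneg (mul_nonneg hS.le hS.le) (mul_nonneg hD hD)]
end

section
/- Let 0 < H < 1/2 and 0 < s' < t' < s < t. Define R(a,b,c,d) = (1/2)*((|a-d|)^(2H) + (|b-c|)^(2H) - (|a-c|)^(2H) - (|b-d|)^(2H)) (the covariance E[(B^H_a - B^H_b)(B^H_c - B^H_d)]). Then |R(t,s,t',s')| ≤ ((t-s)*(t'-s')) / (s-t')^(2-2H). -/
open Set

private lemma rpow_diff_le (p x c : ℝ) (hp : p < 0) (hx : 0 < x) (hc : 0 < c) :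
    x ^ p - (x + c) ^ p ≤ (-p) * c * x ^ (p - 1) := by
  have hxc : x < x + c := by linarith
  have hpos : ∀ u ∈ Icc x (x + c), (0:ℝ) < u := fun u hu => lt_of_lt_of_le hx hu.1
  have hcont : ContinuousOn (fun u : ℝ => u ^ p) (Icc x (x + c)) := by
    intro u hu
    exact (Real.continuousAt_rpow_const u p (Or.inl (hpos u hu).ne')).continuousWithinAt
  have hdiff : DifferentiableOn ℝ (fun u : ℝ => u ^ p) (Ioo x (x + c)) := by
    intro u hu
    exact (Real.hasDerivAt_rpow_const (Or.inl (hpos u (Ioo_subset_Icc_self hu)).ne')).differentiableAt.differentiableWithinAt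
  obtain ⟨η, hη, hslope⟩ := exists_deriv_eq_slope (fun u : ℝ => u ^ p) hxc hcont hdiff
  have hηpos : 0 < η := lt_trans hx hη.1
  have hderiv : deriv (fun u : ℝ => u ^ p) η = p * η ^ (p - 1) :=
    (Real.hasDerivAt_rpow_const (Or.inl hηpos.ne')).deriv
  have key : x ^ p - (x + c) ^ p = (-p) * c * η ^ (p - 1) := by
    rw [hderiv] at hslope
    have hc' : (x + c) - x = c := by ring
    rw [hc'] at hslope
    have h2 := (div_eq_iff hc.ne').mp hslope.symm
    linear_combination -h2
  rw [key]
  have hmono : η ^ (p - 1) ≤ x ^ (p - 1) :=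
    Real.rpow_le_rpow_of_nonpos hx hη.1.le (by linarith)
  have hnp : 0 < -p := by linarith
  exact mul_le_mul_of_nonneg_left hmono (mul_pos hnp hc).le

theorem stmt7 (H : ℝ) (hH0 : 0 < H) (hH1 : H < 1/2)
    (s' t' s t : ℝ) (h1 : 0 < s') (h2 : s' < t') (h3 : t' < s) (h4 : s < t)
    (R : ℝ → ℝ → ℝ → ℝ → ℝ)
    (hR : ∀ a b c d, R a b c d =
      (1/2) * (|a - d| ^ (2*H) + |b - c| ^ (2*H) - |a - c| ^ (2*H) - |b - d| ^ (2*H))) :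
    |R t s t' s'| ≤ ((t - s) * (t' - s')) / (s - t') ^ (2 - 2*H) := by
  set α := 2 * H with hα
  have hα0 : 0 < α := by positivity
  have hα1 : α < 1 := by simp [hα]; linarith
  set c := t - s with hc
  set a := s - t' with ha
  set b := s - s' with hb
  have hcpos : 0 < c := by simp [hc]; linarith
  have hapos : 0 < a := by simp [ha]; linarith
  have hab : a < b := by simp [ha, hb]; linarith
  -- rewrite R
  have hRval : R t s t' s' = (1/2) * ((t - s') ^ α + (s - t') ^ α - (t - t') ^ α - (s - s') ^ α) := by
    rw [hR]
    rw [abs_of_pos (by linarith : (0:ℝ) < t - s'), abs_of_pos (by linarith : (0:ℝ) < s - t'),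
      abs_of_pos (by linarith : (0:ℝ) < t - t'), abs_of_pos (by linarith : (0:ℝ) < s - s')]
  set F : ℝ → ℝ := fun x => (x + c) ^ α - x ^ α with hF
  clear_value α c a b F
  have hFa : F a = (t - t') ^ α - (s - t') ^ α := by
    simp only [hF, ha, hc]; ring_nf
  have hFb : F b = (t - s') ^ α - (s - s') ^ α := by
    simp only [hF, hb, hc]; ring_nf
  have hRF : R t s t' s' = (F b - F a) / 2 := by
    rw [hRval, hFa, hFb]; ring
  -- MVT on F over [a, b]
  have hpos : ∀ u ∈ Icc a b, (0:ℝ) < u := fun u hu => lt_of_lt_of_le hapos hu.1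
  have hcont : ContinuousOn F (Icc a b) := by
    rw [hF]
    intro u hu
    have h1 : ContinuousAt (fun x : ℝ => (x + c) ^ α) u :=
      ContinuousAt.rpow_const (by fun_prop) (Or.inr hα0.le)
    have h2 : ContinuousAt (fun x : ℝ => x ^ α) u :=
      ContinuousAt.rpow_const (by fun_prop) (Or.inr hα0.le)
    exact (h1.sub h2).continuousWithinAt
  have hFderiv : ∀ u ∈ Ioo a b, HasDerivAt F (α * (u + c) ^ (α - 1) - α * u ^ (α - 1)) u := by
    rw [hF]
    intro u hu
    have hu0 : 0 < u := hpos u (Ioo_subset_Icc_self hu)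
    have d1 : HasDerivAt (fun x : ℝ => (x + c) ^ α) (α * (u + c) ^ (α - 1)) u := by
      have h0 : HasDerivAt (fun x : ℝ => x ^ α) (α * (u + c) ^ (α - 1)) (u + c) := by
        have := Real.hasDerivAt_rpow_const (x := u + c) (p := α) (Or.inl (by positivity : (0:ℝ) < u + c).ne')
        simpa [mul_comm] using this
      have hadd : HasDerivAt (fun x : ℝ => x + c) 1 u := (hasDerivAt_id u).add_const c
      exact h0.comp_add_const u c
    have d2 : HasDerivAt (fun x : ℝ => x ^ α) (α * u ^ (α - 1)) u := by
      have := Real.hasDerivAt_rpow_const (x := u) (p := α) (Or.inl hu0.ne')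
      simpa [mul_comm] using this
    exact d1.sub d2
  have hdiff : DifferentiableOn ℝ F (Ioo a b) := fun u hu =>
    (hFderiv u hu).differentiableAt.differentiableWithinAt
  obtain ⟨ξ, hξ, hslope⟩ := exists_deriv_eq_slope F hab hcont hdiff
  have hξ0 : 0 < ξ := lt_trans hapos hξ.1
  have hderivξ : deriv F ξ = α * (ξ + c) ^ (α - 1) - α * ξ ^ (α - 1) :=
    (hFderiv ξ hξ).deriv
  have hmain : F a - F b = α * (ξ ^ (α - 1) - (ξ + c) ^ (α - 1)) * (b - a) := by
    rw [hderivξ] at hslope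
    have hba : 0 < b - a := by linarith
    have h2 := (div_eq_iff hba.ne').mp hslope.symm
    linear_combination -h2
  -- bound the derivative term
  have hstep : ξ ^ (α - 1) - (ξ + c) ^ (α - 1) ≤ (1 - α) * c * ξ ^ (α - 1 - 1) := by
    have := rpow_diff_le (α - 1) ξ c (by linarith) hξ0 hcpos
    simpa [neg_sub] using this
  have hξa : ξ ^ (α - 1 - 1) ≤ a ^ (α - 1 - 1) :=
    Real.rpow_le_rpow_of_nonpos hapos hξ.1.le (by linarith)
  have hstep2 : ξ ^ (α - 1) - (ξ + c) ^ (α - 1) ≤ (1 - α) * c * a ^ (α - 1 - 1) := by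
    have h1α : (0:ℝ) ≤ (1 - α) * c := by nlinarith
    nlinarith [mul_le_mul_of_nonneg_left hξa h1α]
  have hstep0 : 0 ≤ ξ ^ (α - 1) - (ξ + c) ^ (α - 1) := by
    have := Real.rpow_le_rpow_of_nonpos hξ0 (by linarith : ξ ≤ ξ + c) (by linarith : α - 1 ≤ 0)
    linarith
  have hba : 0 < b - a := by linarith
  have hFab : 0 ≤ F a - F b := by
    rw [hmain]
    exact mul_nonneg (mul_nonneg hα0.le hstep0) hba.le
  have habs : |R t s t' s'| = (F a - F b) / 2 := by
    rw [hRF, abs_of_nonpos (by linarith : (F b - F a) / 2 ≤ 0)]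
    ring
  rw [habs]
  have hbound : F a - F b ≤ α * ((1 - α) * c * a ^ (α - 1 - 1)) * (b - a) := by
    rw [hmain]
    exact mul_le_mul_of_nonneg_right (mul_le_mul_of_nonneg_left hstep2 hα0.le) hba.le
  have hpowmul : a ^ (α - 1 - 1) * a ^ (2 - α) = 1 := by
    rw [← Real.rpow_add hapos, show α - 1 - 1 + (2 - α) = 0 by ring, Real.rpow_zero]
  have hfinal2 : (F a - F b) / 2 ≤ c * (b - a) / a ^ (2 - α) := by
    rw [div_le_div_iff₀ two_pos (Real.rpow_pos_of_pos hapos _)]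
    calc (F a - F b) * a ^ (2 - α)
        ≤ (α * ((1 - α) * c * a ^ (α - 1 - 1)) * (b - a)) * a ^ (2 - α) :=
          mul_le_mul_of_nonneg_right hbound (Real.rpow_pos_of_pos hapos _).le
      _ = (α * (1 - α)) * (c * (b - a)) * (a ^ (α - 1 - 1) * a ^ (2 - α)) := by ring
      _ = (α * (1 - α)) * (c * (b - a)) := by rw [hpowmul, mul_one]
      _ ≤ 2 * (c * (b - a)) := by
          have hcoef : α * (1 - α) ≤ 2 := by nlinarith
          exact mul_le_mul_of_nonneg_right hcoef (mul_pos hcpos hba).le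
      _ = c * (b - a) * 2 := by ring
  have hba2 : t' - s' = b - a := by rw [hb, ha]; ring
  rw [hba2]
  exact hfinal2
end

section
/- Let 0 < H < 1/2 and 0 < s' < t' < s < t. Define R = (1/2)*((t-s')^(2H) + (s-t')^(2H) - (t-t')^(2H) - (s-s')^(2H)). Then there is a constant C depending only on H such that |R| ≤ C * (t-s)^(2H) * (t'-s')^(2H) / (s-t')^(2H). -/
open Set
open scoped NNReal

lemma mvt_rpow (p : ℝ) {x y : ℝ} (hx : 0 < x) (hxy : x < y) :
    ∃ ξ, x < ξ ∧ ξ < y ∧ y ^ p - x ^ p = (y - x) * (p * ξ ^ (p - 1)) := by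
  have h : ∀ z ∈ Set.Ioo x y, HasDerivAt (fun u : ℝ => u ^ p) (p * z ^ (p-1)) z := by
    intro z hz
    have := Real.hasDerivAt_rpow_const (x := z) (p := p) (Or.inl (ne_of_gt (hx.trans hz.1)))
    simpa [mul_comm] using this
  have hc : ContinuousOn (fun u : ℝ => u ^ p) (Set.Icc x y) := by
    intro z hz
    exact (Real.continuousAt_rpow_const z p (Or.inl (ne_of_gt (hx.trans_le hz.1)))).continuousWithinAt
  obtain ⟨ξ, hξ, heq⟩ := exists_hasDerivAt_eq_slope _ _ hxy hc h
  refine ⟨ξ, hξ.1, hξ.2, ?_⟩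
  have hne : y - x ≠ 0 := by linarith [hξ.1, hξ.2]
  field_simp at heq
  linarith [heq]

lemma rpow_subadd {x y α : ℝ} (hx : 0 ≤ x) (hy : 0 ≤ y) (h0 : 0 ≤ α) (h1 : α ≤ 1) :
    (x + y) ^ α ≤ x ^ α + y ^ α := by
  have := NNReal.rpow_add_le_add_rpow (x.toNNReal) (y.toNNReal) h0 h1
  have h2 : ((x.toNNReal + y.toNNReal : ℝ≥0) : ℝ) = x + y := by
    simp [Real.coe_toNNReal _ hx, Real.coe_toNNReal _ hy]
  calc (x + y) ^ α = (((x.toNNReal + y.toNNReal : ℝ≥0) : ℝ)) ^ α := by rw [h2]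
    _ = (((x.toNNReal + y.toNNReal : ℝ≥0) ^ α : ℝ≥0) : ℝ) := by rw [NNReal.coe_rpow]
    _ ≤ (((x.toNNReal ^ α + y.toNNReal ^ α : ℝ≥0)) : ℝ) := by exact_mod_cast this
    _ = x ^ α + y ^ α := by
        push_cast [NNReal.coe_rpow, Real.coe_toNNReal _ hx, Real.coe_toNNReal _ hy]
        ring

lemma second_diff {α a b c : ℝ} (hα0 : 0 < α) (hα1 : α < 1)
    (ha : 0 < a) (hb : 0 < b) (hc : 0 < c) :
    0 ≤ ((b+c)^α - b^α) - ((a+b+c)^α - (a+b)^α) ∧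
    ((b+c)^α - b^α) - ((a+b+c)^α - (a+b)^α) ≤ a * c * b ^ (α - 2) := by
  -- MVT on g(x) = (x+c)^α - x^α over [b, a+b]
  have hg : ∀ z ∈ Set.Ioo b (a+b), HasDerivAt (fun u : ℝ => (u+c)^α - u^α)
      (α * (z+c) ^ (α-1) - α * z ^ (α-1)) z := by
    intro z hz
    have hz0 : 0 < z := hb.trans hz.1
    have h1 := HasDerivAt.rpow_const (p := α) ((hasDerivAt_id z).add_const c)
      (Or.inl (by positivity))
    have h2 := HasDerivAt.rpow_const (p := α) (hasDerivAt_id z) (Or.inl (ne_of_gt hz0))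
    have h3 := h1.sub h2
    simp only [id_eq, id, one_mul] at h3
    exact h3
  have hcont : ContinuousOn (fun u : ℝ => (u+c)^α - u^α) (Set.Icc b (a+b)) := by
    intro z hz
    have hz0 : 0 < z := hb.trans_le hz.1
    exact (((continuousAt_id.add continuousAt_const).rpow_const
      (Or.inl (by positivity : z + c ≠ 0))).sub
      (continuousAt_id.rpow_const (Or.inl (ne_of_gt hz0)))).continuousWithinAt
  obtain ⟨ξ, hξ, heq⟩ := exists_hasDerivAt_eq_slope _ _ (by linarith : b < a + b) hcont hg
  have hξ0 : 0 < ξ := hb.trans hξ.1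
  -- inner MVT: (ξ+c)^(α-1) - ξ^(α-1)
  obtain ⟨η, hη1, hη2, hηeq⟩ := mvt_rpow (α-1) hξ0 (by linarith : ξ < ξ + c)
  have hη0 : 0 < η := hξ0.trans hη1
  -- from heq : α * (ξ+c)^(α-1) - α * ξ^(α-1) = (g(a+b) - g(b)) / a
  have hane : (a:ℝ) ≠ 0 := ne_of_gt ha
  have key : ((b+c)^α - b^α) - ((a+b+c)^α - (a+b)^α)
      = a * (α * (ξ^(α-1) - (ξ+c)^(α-1))) := by
    have : α * (ξ+c) ^ (α-1) - α * ξ ^ (α-1)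
        = (((a+b+c)^α - (a+b)^α) - ((b+c)^α - b^α)) / a := by
      rw [heq]; ring_nf
    field_simp at this
    linarith [this]
  have hdiff : ξ^(α-1) - (ξ+c)^(α-1) = c * ((1-α) * η^(α-2)) := by
    have : (ξ+c)^(α-1) - ξ^(α-1) = c * ((α-1) * η^(α-1-1)) := by
      simpa using hηeq
    rw [show α - 1 - 1 = α - 2 by ring] at this
    linarith [this]
  rw [key, hdiff]
  have hηpow : (0:ℝ) < η ^ (α-2) := Real.rpow_pos_of_pos hη0 _
  have h1a : (0:ℝ) < 1 - α := by linarith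
  constructor
  · exact (mul_pos ha (mul_pos hα0 (mul_pos hc (mul_pos h1a hηpow)))).le
  · have hmono : η ^ (α-2) ≤ b ^ (α-2) := by
      refine Real.rpow_le_rpow_of_nonpos hb (by linarith [hξ.1]) (by linarith)
    have hm2 : (a*c) * η^(α-2) ≤ (a*c) * b^(α-2) :=
      mul_le_mul_of_nonneg_left hmono (by positivity)
    have hαα : α * (1-α) ≤ 1 := by nlinarith [sq_nonneg (2*α - 1)]
    calc a * (α * (c * ((1-α) * η^(α-2)))) = (α * (1-α)) * ((a*c) * η^(α-2)) := by ring
      _ ≤ 1 * ((a*c) * b^(α-2)) := mul_le_mul hαα hm2 (by positivity) one_pos.le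
      _ = a * c * b^(α-2) := by ring

theorem stmt8 (H : ℝ) (hH0 : 0 < H) (hH1 : H < 1/2) :
    ∃ C : ℝ, 0 < C ∧ ∀ s' t' s t : ℝ, 0 < s' → s' < t' → t' < s → s < t →
      |(1/2) * ((t - s') ^ (2*H) + (s - t') ^ (2*H) - (t - t') ^ (2*H) - (s - s') ^ (2*H))|
        ≤ C * (t - s) ^ (2*H) * (t' - s') ^ (2*H) / (s - t') ^ (2*H) := by
  set α := 2 * H with hαdef
  have hα0 : 0 < α := by positivity
  have hα1 : α < 1 := by rw [hαdef]; linarith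
  refine ⟨1, one_pos, fun s' t' s t hs' h1 h2 h3 => ?_⟩
  set a := t - s with hadef
  set b := s - t' with hbdef
  set c := t' - s' with hcdef
  have ha : 0 < a := by rw [hadef]; linarith
  have hb : 0 < b := by rw [hbdef]; linarith
  have hc : 0 < c := by rw [hcdef]; linarith
  have e1 : t - s' = a + b + c := by rw [hadef, hbdef, hcdef]; ring
  have e2 : t - t' = a + b := by rw [hadef, hbdef]; ring
  have e3 : s - s' = b + c := by rw [hbdef, hcdef]; ring
  rw [e1, e2, e3]
  clear_value a b c α
  obtain ⟨hD0, hD1⟩ := second_diff hα0 hα1 ha hb hc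
  set D := ((b+c)^α - b^α) - ((a+b+c)^α - (a+b)^α) with hDdef
  clear_value D
  have habs : |(1/2 : ℝ) * ((a+b+c) ^ α + b ^ α - (a+b) ^ α - (b+c) ^ α)| = (1/2) * D := by
    rw [abs_of_nonpos (by linarith), hDdef]; ring
  rw [habs]
  have hbα : (0:ℝ) < b ^ α := Real.rpow_pos_of_pos hb _
  have haα : (0:ℝ) < a ^ α := Real.rpow_pos_of_pos ha _
  have hcα : (0:ℝ) < c ^ α := Real.rpow_pos_of_pos hc _
  rw [one_mul, le_div_iff₀ hbα]
  rcases le_or_gt b a with hba | hba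
  · -- D ≤ c^α, and b^α ≤ a^α
    have hDc : D ≤ c ^ α := by
      have h4 : (b+c)^α ≤ b^α + c^α := rpow_subadd hb.le hc.le hα0.le hα1.le
      have h5 : (a+b)^α ≤ (a+b+c)^α := Real.rpow_le_rpow (by linarith) (by linarith) hα0.le
      simp only [hDdef]; linarith
    have hba' : b ^ α ≤ a ^ α := Real.rpow_le_rpow hb.le hba hα0.le
    calc (1/2) * D * b ^ α ≤ 1 * c ^ α * a ^ α := by
          apply mul_le_mul (by nlinarith) hba' hbα.le (by positivity)
      _ ≤ a ^ α * c ^ α := by nlinarith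
  rcases le_or_gt b c with hbc | hbc
  · -- D ≤ a^α (alternate pairing), and b^α ≤ c^α
    have hDa : D ≤ a ^ α := by
      have h4 : (a+b)^α ≤ a^α + b^α := rpow_subadd ha.le hb.le hα0.le hα1.le
      have h5 : (b+c)^α ≤ (a+b+c)^α := Real.rpow_le_rpow (by linarith) (by linarith) hα0.le
      simp only [hDdef]; linarith
    have hbc' : b ^ α ≤ c ^ α := Real.rpow_le_rpow hb.le hbc hα0.le
    calc (1/2) * D * b ^ α ≤ 1 * a ^ α * c ^ α := by
          apply mul_le_mul (by nlinarith) hbc' hbα.le (by positivity)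
      _ = a ^ α * c ^ α := by ring
  · -- a < b, c < b : use second difference bound
    have hacb : a * c ≤ b * b := by nlinarith
    have hab2 : (0:ℝ) < b ^ (α - 2) := Real.rpow_pos_of_pos hb _
    have step : a * c * b ^ (α-2) * b ^ α ≤ a ^ α * c ^ α := by
      have hbb : b * b = b ^ (2:ℝ) := by
        rw [show (2:ℝ) = ((2:ℕ):ℝ) by norm_num, Real.rpow_natCast]; ring
      have e4 : b ^ (α-2) * b ^ α = (b*b) ^ (α-1) := by
        rw [hbb, ← Real.rpow_mul hb.le, ← Real.rpow_add hb]
        congr 1; ring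
      have e5 : a ^ α * c ^ α = (a*c) ^ α := (Real.mul_rpow ha.le hc.le).symm
      have e6 : (a*c) ^ α = (a*c) * (a*c) ^ (α-1) := by
        have h := Real.rpow_add (mul_pos ha hc) 1 (α-1)
        rw [Real.rpow_one, show (1:ℝ) + (α-1) = α by ring] at h
        exact h
      have hneg : (b*b) ^ (α-1) ≤ (a*c) ^ (α-1) :=
        Real.rpow_le_rpow_of_nonpos (by positivity) hacb (by linarith)
      rw [mul_assoc, e4, e5, e6]
      have := mul_le_mul_of_nonneg_left hneg (by positivity : (0:ℝ) ≤ a * c)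
      linarith
    calc (1/2) * D * b ^ α ≤ a * c * b ^ (α-2) * b ^ α := by
          apply mul_le_mul_of_nonneg_right (by linarith) hbα.le
      _ ≤ a ^ α * c ^ α := step
end

section
/- Let 0 < H < 1/2 and t > s > r > 0. Then |E[B^H_r (B^H_t - B^H_s)]| ≤ (t-s)^(2H), where E[B^H_r (B^H_t - B^H_s)] = (1/2)*((t^(2H) - s^(2H)) - ((t-r)^(2H) - (s-r)^(2H))). -/
open NNReal
lemma aux_sub_rpow_le {x y p : ℝ} (hx : 0 ≤ x) (hxy : x ≤ y)
    (hp0 : 0 ≤ p) (hp1 : p ≤ 1) : y ^ p - x ^ p ≤ (y - x) ^ p := by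
  have h := NNReal.rpow_add_le_add_rpow (⟨y - x, by linarith⟩ : ℝ≥0)
    (⟨x, hx⟩ : ℝ≥0) hp0 hp1
  have hc : (y - x + x) ^ p ≤ (y - x) ^ p + x ^ p := NNReal.coe_le_coe.2 h
  rw [sub_add_cancel] at hc
  linarith

theorem stmt11 (H r s t : ℝ) (hH0 : 0 < H) (hH1 : H < 1/2)
    (hr : 0 < r) (hrs : r < s) (hst : s < t) :
    |(1/2) * ((t ^ (2*H) - s ^ (2*H)) - ((t - r) ^ (2*H) - (s - r) ^ (2*H)))|
      ≤ (t - s) ^ (2*H) := by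
  have hp0 : (0:ℝ) ≤ 2*H := by linarith
  have hp1 : 2*H ≤ 1 := by linarith
  have h1 : t ^ (2*H) - s ^ (2*H) ≤ (t - s) ^ (2*H) :=
    aux_sub_rpow_le (by linarith) hst.le hp0 hp1
  have h2 : (t - r) ^ (2*H) - (s - r) ^ (2*H) ≤ (t - r - (s - r)) ^ (2*H) :=
    aux_sub_rpow_le (by linarith) (by linarith) hp0 hp1
  have h2' : (t - r) ^ (2*H) - (s - r) ^ (2*H) ≤ (t - s) ^ (2*H) := by
    have : t - r - (s - r) = t - s := by ring
    rwa [this] at h2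
  have hn1 : 0 ≤ t ^ (2*H) - s ^ (2*H) := by
    have := Real.rpow_le_rpow (by linarith : (0:ℝ) ≤ s) hst.le hp0
    linarith
  have hn2 : 0 ≤ (t - r) ^ (2*H) - (s - r) ^ (2*H) := by
    have := Real.rpow_le_rpow (by linarith : (0:ℝ) ≤ s - r) (by linarith : s - r ≤ t - r) hp0
    linarith
  rw [abs_le]
  constructor <;> nlinarith [Real.rpow_nonneg (by linarith : (0:ℝ) ≤ t - s) (2*H)]
end

section
/- Let 0 < H < 1/2 and t > s > r > 0. Then |E[B^H_t (B^H_s - B^H_r)]| ≤ (s-r)^(2H), where E[B^H_t (B^H_s - B^H_r)] = (1/2)*((s^(2H) - r^(2H)) - ((t-s)^(2H) - (t-r)^(2H))). -/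
lemma rpow_sub_le_sub_rpow (a b p : ℝ) (hp0 : 0 < p) (hp1 : p ≤ 1)
    (ha : 0 ≤ a) (hab : a ≤ b) : b ^ p - a ^ p ≤ (b - a) ^ p := by
  have hba : (0:ℝ) ≤ b - a := by linarith
  have key : ((b - a) + a) ^ p ≤ (b - a) ^ p + a ^ p := by
    have h := NNReal.rpow_add_le_add_rpow (b - a).toNNReal a.toNNReal hp0.le hp1
    have := NNReal.coe_le_coe.2 h
    push_cast at this
    rwa [Real.coe_toNNReal _ hba, Real.coe_toNNReal _ ha] at this
  have : b ^ p ≤ (b - a) ^ p + a ^ p := by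
    simpa [sub_add_cancel] using key
  linarith

theorem stmt12 (H r s t : ℝ) (hH0 : 0 < H) (hH1 : H < 1/2)
    (hr : 0 < r) (hrs : r < s) (hst : s < t) :
    |(1/2) * ((s ^ (2*H) - r ^ (2*H)) - ((t - s) ^ (2*H) - (t - r) ^ (2*H)))|
      ≤ (s - r) ^ (2*H) := by
  set p := 2 * H with hp
  have hp0 : 0 < p := by positivity
  have hp1 : p ≤ 1 := by rw [hp]; linarith
  have hA : s ^ p - r ^ p ≤ (s - r) ^ p :=
    rpow_sub_le_sub_rpow r s p hp0 hp1 hr.le hrs.le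
  have hA0 : 0 ≤ s ^ p - r ^ p := by
    have := Real.rpow_le_rpow hr.le hrs.le hp0.le
    linarith
  have hB : (t - r) ^ p - (t - s) ^ p ≤ (s - r) ^ p := by
    have := rpow_sub_le_sub_rpow (t - s) (t - r) p hp0 hp1 (by linarith) (by linarith)
    have heq : t - r - (t - s) = s - r := by ring
    rwa [heq] at this
  have hB0 : 0 ≤ (t - r) ^ p - (t - s) ^ p := by
    have := Real.rpow_le_rpow (by linarith : (0:ℝ) ≤ t - s) (by linarith : t - s ≤ t - r) hp0.le
    linarith
  rw [abs_le]
  constructor <;> nlinarith [Real.rpow_nonneg (by linarith : (0:ℝ) ≤ s - r) p]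
end
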